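/- (Hoeffding inequality for uniformly ergodic Markov chains.) Suppose there exist a probability vector φ on S, a real λ > 0, and an integer m ≥ 1 such that (P^m)(x, y) ≥ λ·φ(y) for all x, y ∈ S. Let g : S → ℝ with ‖g‖ := max_{x∈S} |g(x)| > 0, and let S_T = (1/T)·Σ_{t=1}^T g(X_t). Then for every ε > 0 and every integer T > 2‖g‖m/(λε), the probability under the stationary chain of length T+1 (with states X_0, X_1, ..., X_T) that |S_T − Σ_{x∈S} π(x)·g(x)| ≥ ε is at most 2·exp(−λ²·(Tε − 2‖g‖m/λ)² / (2T‖g‖²m²)). -/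

import Mathlib

set_option maxHeartbeats 1000000
open Fin.NatCast
section


lemma hoeff_core (p : ℝ) (hp0 : 0 ≤ p) (hp1 : p ≤ 1) (h : ℝ) :
    (1-p) * Real.exp (-(p*h)) + p * Real.exp ((1-p)*h) ≤ Real.exp (h^2/8) := by
  set A : ℝ → ℝ := fun x => (1-p) * Real.exp (-(p*x)) + p * Real.exp ((1-p)*x) with hA
  set B : ℝ → ℝ := fun x => p*(1-p)*(Real.exp ((1-p)*x) - Real.exp (-(p*x))) with hB
  set C : ℝ → ℝ := fun x => p*(1-p)*((1-p)*Real.exp ((1-p)*x) + p*Real.exp (-(p*x))) with hC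
  have Apos : ∀ x, 0 < A x := by
    intro x
    have e1 := Real.exp_pos (-(p*x))
    have e2 := Real.exp_pos ((1-p)*x)
    rcases lt_or_eq_of_le hp1 with hlt | heq
    · have h1 : 0 < (1-p) * Real.exp (-(p*x)) := mul_pos (by linarith) e1
      have h2 : 0 ≤ p * Real.exp ((1-p)*x) := mul_nonneg hp0 (le_of_lt e2)
      simp only [hA]; linarith
    · subst heq; simp only [hA]; simp
  have hAd : ∀ x, HasDerivAt A (B x) x := by
    intro x
    have h1 : HasDerivAt (fun x : ℝ => Real.exp (-(p*x))) (Real.exp (-(p*x)) * (-p)) x := by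
      have := (hasDerivAt_id x).const_mul (-p)
      have h2 : HasDerivAt (fun x : ℝ => -(p*x)) (-p) x := by
        simpa [neg_mul, Pi.neg_def] using ((hasDerivAt_id x).const_mul p).neg
      simpa [Function.comp_def] using (Real.hasDerivAt_exp (-(p*x))).comp x h2
    have h2 : HasDerivAt (fun x : ℝ => Real.exp ((1-p)*x)) (Real.exp ((1-p)*x) * (1-p)) x := by
      have h3 : HasDerivAt (fun x : ℝ => (1-p)*x) (1-p) x := by
        simpa using (hasDerivAt_id x).const_mul (1-p)
      simpa [Function.comp_def] using (Real.hasDerivAt_exp ((1-p)*x)).comp x h3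
    have := (h1.const_mul (1-p)).add (h2.const_mul p)
    refine this.congr_deriv ?_
    simp only [hB]; ring
  have hBd : ∀ x, HasDerivAt B (C x) x := by
    intro x
    have h1 : HasDerivAt (fun x : ℝ => Real.exp (-(p*x))) (Real.exp (-(p*x)) * (-p)) x := by
      have h2 : HasDerivAt (fun x : ℝ => -(p*x)) (-p) x := by
        simpa [neg_mul, Pi.neg_def] using ((hasDerivAt_id x).const_mul p).neg
      simpa [Function.comp_def] using (Real.hasDerivAt_exp (-(p*x))).comp x h2
    have h2 : HasDerivAt (fun x : ℝ => Real.exp ((1-p)*x)) (Real.exp ((1-p)*x) * (1-p)) x := by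
      have h3 : HasDerivAt (fun x : ℝ => (1-p)*x) (1-p) x := by
        simpa using (hasDerivAt_id x).const_mul (1-p)
      simpa [Function.comp_def] using (Real.hasDerivAt_exp ((1-p)*x)).comp x h3
    have := (h2.sub h1).const_mul (p*(1-p))
    refine this.congr_deriv ?_
    simp only [hC]; ring
  set f : ℝ → ℝ := fun x => x^2/8 - Real.log (A x) with hf
  set G : ℝ → ℝ := fun x => x/4 - B x / A x with hG
  have hfd : ∀ x, HasDerivAt f (G x) x := by
    intro x
    have h1 : HasDerivAt (fun x : ℝ => Real.log (A x)) (B x / A x) x :=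
      (hAd x).log (ne_of_gt (Apos x))
    have h2 : HasDerivAt (fun x : ℝ => x^2/8) (x/4) x := by
      have := ((hasDerivAt_id x).pow 2).div_const 8
      refine this.congr_deriv ?_; simp [id]; ring
    simpa only [hf, hG, Pi.sub_def] using h2.sub h1
  have hGd : ∀ x, HasDerivAt G (1/4 - (C x * A x - B x * B x)/(A x)^2) x := by
    intro x
    have h1 : HasDerivAt (fun x : ℝ => B x / A x) ((C x * A x - B x * B x)/(A x)^2) x :=
      (hBd x).div (hAd x) (ne_of_gt (Apos x))
    have h2 : HasDerivAt (fun x : ℝ => x/4) (1/4) x := (hasDerivAt_id x).div_const 4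
    simpa only [hG, Pi.sub_def] using h2.sub h1
  have hG0 : ∀ x, 0 ≤ 1/4 - (C x * A x - B x * B x)/(A x)^2 := by
    intro x
    have key : C x * A x - B x * B x
        = ((1-p) * Real.exp (-(p*x))) * (p * Real.exp ((1-p)*x)) := by
      simp only [hA, hB, hC]; ring
    have hA2 : (0:ℝ) < (A x)^2 := pow_pos (Apos x) 2
    rw [sub_nonneg, div_le_iff₀ hA2, key]
    have e1 := Real.exp_pos (-(p*x))
    have e2 := Real.exp_pos ((1-p)*x)
    nlinarith [sq_nonneg ((1-p) * Real.exp (-(p*x)) - p * Real.exp ((1-p)*x))]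
  have hGmono : Monotone G := by
    apply monotone_of_deriv_nonneg
    · exact fun x => (hGd x).differentiableAt
    · intro x; rw [(hGd x).deriv]; exact hG0 x
  have hB00 : B 0 = 0 := by simp [hB]
  have hG00 : G 0 = 0 := by simp [hG, hB00]
  have hA0 : A 0 = 1 := by simp [hA]
  have hf0 : f 0 = 0 := by simp [hf, hA0]
  have hfcont : Continuous f := by
    have : Differentiable ℝ f := fun x => (hfd x).differentiableAt
    exact this.continuous
  have hfge : ∀ x, 0 ≤ f x := by
    intro x
    rcases le_or_gt 0 x with hx | hx
    · have hmono : MonotoneOn f (Set.Ici (0:ℝ)) := by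
        apply monotoneOn_of_deriv_nonneg (convex_Ici 0) (hfcont.continuousOn)
        · intro y _; exact (hfd y).differentiableAt.differentiableWithinAt
        · intro y hy
          rw [(hfd y).deriv, ← hG00]
          exact hGmono (le_of_lt (by simpa using hy))
      have := hmono Set.self_mem_Ici (Set.mem_Ici.mpr hx) hx
      linarith [hf0 ▸ this]
    · have hmono : AntitoneOn f (Set.Iic (0:ℝ)) := by
        apply antitoneOn_of_deriv_nonpos (convex_Iic 0) (hfcont.continuousOn)
        · intro y _; exact (hfd y).differentiableAt.differentiableWithinAt
        · intro y hy
          rw [(hfd y).deriv, ← hG00]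
          exact hGmono (le_of_lt (by simpa using hy))
      have := hmono (Set.mem_Iic.mpr (le_of_lt hx)) Set.self_mem_Iic (le_of_lt hx)
      linarith [hf0 ▸ this]
  have := hfge h
  have hlog : Real.log (A h) ≤ h^2/8 := by simp only [hf] at this; linarith
  calc A h = Real.exp (Real.log (A h)) := (Real.exp_log (Apos h)).symm
    _ ≤ Real.exp (h^2/8) := Real.exp_le_exp.mpr hlog


lemma hoeff_sum {ι : Type*} [Fintype ι] (p : ι → ℝ) (hp0 : ∀ i, 0 ≤ p i)
    (hp1 : ∑ i, p i = 1) (D : ι → ℝ) (a b : ℝ)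
    (hab : ∀ i, a ≤ D i ∧ D i ≤ b) (hmean : ∑ i, p i * D i = 0) (s : ℝ) :
    ∑ i, p i * Real.exp (s * D i) ≤ Real.exp (s^2 * (b-a)^2 / 8) := by
  have hne : Nonempty ι := by
    by_contra hc
    rw [not_nonempty_iff] at hc
    rw [Finset.univ_eq_empty, Finset.sum_empty] at hp1
    norm_num at hp1
  obtain ⟨i0⟩ := hne
  have hab0 : a ≤ b := le_trans (hab i0).1 (hab i0).2
  have ha0 : a ≤ 0 := by
    calc a = ∑ i, p i * a := by rw [← Finset.sum_mul, hp1, one_mul]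
    _ ≤ ∑ i, p i * D i := Finset.sum_le_sum fun i _ => mul_le_mul_of_nonneg_left (hab i).1 (hp0 i)
    _ = 0 := hmean
  have hb0 : 0 ≤ b := by
    calc (0:ℝ) = ∑ i, p i * D i := hmean.symm
    _ ≤ ∑ i, p i * b := Finset.sum_le_sum fun i _ => mul_le_mul_of_nonneg_left (hab i).2 (hp0 i)
    _ = b := by rw [← Finset.sum_mul, hp1, one_mul]
  rcases eq_or_lt_of_le hab0 with heq | hlt
  · -- a = b : all D i = a, mean forces a = 0
    have hDa : ∀ i, D i = a := fun i => le_antisymm (heq ▸ (hab i).2) (hab i).1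
    have ha : a = 0 := le_antisymm ha0 (heq ▸ hb0)
    have : ∀ i, D i = 0 := fun i => (hDa i).trans ha
    calc ∑ i, p i * Real.exp (s * D i) = ∑ i, p i := by
          apply Finset.sum_congr rfl; intro i _; rw [this i]; simp
      _ = 1 := hp1
      _ ≤ Real.exp (s^2 * (b-a)^2 / 8) := by
          rw [← Real.exp_zero]; apply Real.exp_le_exp.mpr; positivity
  · have hba : 0 < b - a := by linarith
    -- pointwise convexity bound
    have hpt : ∀ i, Real.exp (s * D i)
        ≤ (b - D i)/(b-a) * Real.exp (s*a) + (D i - a)/(b-a) * Real.exp (s*b) := by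
      intro i
      have hθ : 0 ≤ (b - D i)/(b-a) := div_nonneg (by linarith [(hab i).2]) (le_of_lt hba)
      have hθ' : 0 ≤ (D i - a)/(b-a) := div_nonneg (by linarith [(hab i).1]) (le_of_lt hba)
      have hsum1 : (b - D i)/(b-a) + (D i - a)/(b-a) = 1 := by
        field_simp
        ring
      have := convexOn_exp.2 (Set.mem_univ (s*a)) (Set.mem_univ (s*b)) hθ hθ' hsum1
      simp only [smul_eq_mul] at this
      have harg : (b - D i)/(b-a) * (s*a) + (D i - a)/(b-a) * (s*b) = s * D i := by
        field_simp; ring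
      rw [harg] at this
      exact this
    have step1 : ∑ i, p i * Real.exp (s * D i)
        ≤ (b/(b-a)) * Real.exp (s*a) + (-a/(b-a)) * Real.exp (s*b) := by
      calc ∑ i, p i * Real.exp (s * D i)
          ≤ ∑ i, p i * ((b - D i)/(b-a) * Real.exp (s*a) + (D i - a)/(b-a) * Real.exp (s*b)) :=
            Finset.sum_le_sum fun i _ => mul_le_mul_of_nonneg_left (hpt i) (hp0 i)
        _ = ∑ i, ((p i * (b - D i)) * (Real.exp (s*a)/(b-a))
              + (p i * (D i - a)) * (Real.exp (s*b)/(b-a))) := by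
            apply Finset.sum_congr rfl; intro i _; ring
        _ = (∑ i, p i * (b - D i)) * (Real.exp (s*a)/(b-a))
            + (∑ i, p i * (D i - a)) * (Real.exp (s*b)/(b-a)) := by
            rw [Finset.sum_add_distrib, ← Finset.sum_mul, ← Finset.sum_mul]
        _ = (b/(b-a)) * Real.exp (s*a) + (-a/(b-a)) * Real.exp (s*b) := by
            have e1 : ∑ i, p i * (b - D i) = b := by
              have : ∑ i, p i * (b - D i) = (∑ i, p i) * b - ∑ i, p i * D i := by
                rw [Finset.sum_mul, ← Finset.sum_sub_distrib]
                apply Finset.sum_congr rfl; intro i _; ring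
              rw [this, hp1, hmean]; ring
            have e2 : ∑ i, p i * (D i - a) = -a := by
              have : ∑ i, p i * (D i - a) = ∑ i, p i * D i - (∑ i, p i) * a := by
                rw [Finset.sum_mul, ← Finset.sum_sub_distrib]
                apply Finset.sum_congr rfl; intro i _; ring
              rw [this, hp1, hmean]; ring
            rw [e1, e2]; ring
    set q := -a/(b-a) with hq
    have hq0 : 0 ≤ q := div_nonneg (by linarith) (le_of_lt hba)
    have hq1 : q ≤ 1 := by
      rw [hq, div_le_one hba]; linarith
    have key := hoeff_core q hq0 hq1 (s*(b-a))
    have hbane : b - a ≠ 0 := ne_of_gt hba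
    have e3 : -(q*(s*(b-a))) = s*a := by rw [hq]; field_simp
    have e5 : 1 - q = b/(b-a) := by rw [hq]; field_simp; ring
    have e4 : (1-q)*(s*(b-a)) = s*b := by rw [e5]; field_simp
    have e6 : (s*(b-a))^2/8 = s^2*(b-a)^2/8 := by ring
    rw [e3, e4, e5, e6] at key
    linarith [step1, key]

section markov
variable {S : Type} [Fintype S] [Nonempty S] [DecidableEq S]
variable (P : Matrix S S ℝ)

lemma pow_entry_nonneg (hP0 : ∀ x y, 0 ≤ P x y) : ∀ k x y, 0 ≤ (P^k) x y := by
  intro k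
  induction k with
  | zero => intro x y; simp [Matrix.one_apply]; split <;> norm_num
  | succ k ih =>
    intro x y
    rw [pow_succ', Matrix.mul_apply]
    exact Finset.sum_nonneg fun z _ => mul_nonneg (hP0 x z) (ih z y)

lemma pow_rowsum (hP1 : ∀ x, ∑ y, P x y = 1) : ∀ k x, ∑ y, (P^k) x y = 1 := by
  intro k
  induction k with
  | zero => intro x; simp [Matrix.one_apply]
  | succ k ih =>
    intro x
    simp only [pow_succ', Matrix.mul_apply]
    rw [Finset.sum_comm]
    calc ∑ z, ∑ y, P x z * (P^k) z y = ∑ z, P x z * ∑ y, (P^k) z y := by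
          simp [Finset.mul_sum]
      _ = 1 := by simp only [ih]; simpa using hP1 x
end markov

section contract
variable {S : Type} [Fintype S] [Nonempty S] [DecidableEq S]
variable {P : Matrix S S ℝ} (hP0 : ∀ x y, 0 ≤ P x y) (hP1 : ∀ x, ∑ y, P x y = 1)
variable {φ : S → ℝ} (hφ0 : ∀ y, 0 ≤ φ y) (hφ1 : ∑ y, φ y = 1)
variable {lam : ℝ} (hlam : 0 < lam) {m : ℕ} (hm : 1 ≤ m)
variable (hminor : ∀ x y, lam * φ y ≤ (P ^ m) x y)

include hP0 hP1 in
lemma crude_bound (ν : S → ℝ) (k : ℕ) :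
    ∑ y, |∑ z, ν z * (P^k) z y| ≤ ∑ z, |ν z| := by
  calc ∑ y, |∑ z, ν z * (P^k) z y| ≤ ∑ y, ∑ z, |ν z| * (P^k) z y := by
        apply Finset.sum_le_sum; intro y _
        refine le_trans (Finset.abs_sum_le_sum_abs _ _) ?_
        apply Finset.sum_le_sum; intro z _
        rw [abs_mul, abs_of_nonneg (pow_entry_nonneg P hP0 k z y)]
    _ = ∑ z, |ν z| * ∑ y, (P^k) z y := by rw [Finset.sum_comm]; simp [Finset.mul_sum]
    _ = ∑ z, |ν z| := by simp [pow_rowsum P hP1]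

include hP0 hP1 hφ0 hφ1 hlam hminor in
lemma contract_m (ν : S → ℝ) (hν : ∑ z, ν z = 0) :
    ∑ y, |∑ z, ν z * (P^m) z y| ≤ (1 - lam) * ∑ z, |ν z| := by
  have key : ∀ y, ∑ z, ν z * (P^m) z y = ∑ z, ν z * ((P^m) z y - lam * φ y) := by
    intro y
    rw [← sub_eq_zero]
    have : ∑ z, ν z * (P^m) z y - ∑ z, ν z * ((P^m) z y - lam * φ y)
        = (∑ z, ν z) * (lam * φ y) := by
      rw [← Finset.sum_sub_distrib, Finset.sum_mul]
      apply Finset.sum_congr rfl; intro z _; ring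
    rw [this, hν, zero_mul]
  calc ∑ y, |∑ z, ν z * (P^m) z y|
      ≤ ∑ y, ∑ z, |ν z| * ((P^m) z y - lam * φ y) := by
        apply Finset.sum_le_sum; intro y _
        rw [key y]
        refine le_trans (Finset.abs_sum_le_sum_abs _ _) ?_
        apply Finset.sum_le_sum; intro z _
        have h0 : (0:ℝ) ≤ (P^m) z y - lam * φ y := by linarith [hminor z y]
        rw [abs_mul, abs_of_nonneg h0]
    _ = ∑ z, |ν z| * ∑ y, ((P^m) z y - lam * φ y) := by
        rw [Finset.sum_comm]
        exact Finset.sum_congr rfl fun z _ => (Finset.mul_sum _ _ _).symm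
    _ = (1 - lam) * ∑ z, |ν z| := by
        have : ∀ z, ∑ y, ((P^m) z y - lam * φ y) = 1 - lam := by
          intro z
          rw [Finset.sum_sub_distrib, pow_rowsum P hP1, ← Finset.mul_sum, hφ1, mul_one]
        simp only [this]
        rw [← Finset.sum_mul, mul_comm]

include hP0 hP1 hφ0 hφ1 hlam hminor in
lemma contract_pow (hlam1 : lam ≤ 1) (ν : S → ℝ) (hν : ∑ z, ν z = 0) (q : ℕ) :
    ∑ y, |∑ z, ν z * (P^(m*q)) z y| ≤ (1 - lam)^q * ∑ z, |ν z| := by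
  induction q with
  | zero => simp [Matrix.one_apply]
  | succ q ih =>
    have hstep : ∀ y, ∑ z, ν z * (P^(m*(q+1))) z y
        = ∑ w, (∑ z, ν z * (P^(m*q)) z w) * (P^m) w y := by
      intro y
      have hpow : P^(m*(q+1)) = P^(m*q) * P^m := by rw [← pow_add]; ring_nf
      simp only [hpow, Matrix.mul_apply, Finset.mul_sum, Finset.sum_mul]
      rw [Finset.sum_comm]
      apply Finset.sum_congr rfl; intro w _
      apply Finset.sum_congr rfl; intro z _; ring
    have hν' : ∑ w, (∑ z, ν z * (P^(m*q)) z w) = 0 := by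
      rw [Finset.sum_comm]
      calc ∑ z, ∑ w, ν z * (P^(m*q)) z w = ∑ z, ν z * ∑ w, (P^(m*q)) z w := by
            simp [Finset.mul_sum]
        _ = 0 := by simp [pow_rowsum P hP1, hν]
    calc ∑ y, |∑ z, ν z * (P^(m*(q+1))) z y|
        = ∑ y, |∑ w, (∑ z, ν z * (P^(m*q)) z w) * (P^m) w y| := by
          simp only [hstep]
      _ ≤ (1 - lam) * ∑ w, |∑ z, ν z * (P^(m*q)) z w| :=
          contract_m hP0 hP1 hφ0 hφ1 hlam hminor _ hν'
      _ ≤ (1 - lam) * ((1 - lam)^q * ∑ z, |ν z|) := by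
          apply mul_le_mul_of_nonneg_left ih (by linarith)
      _ = (1 - lam)^(q+1) * ∑ z, |ν z| := by ring

include hP0 hP1 hφ0 hφ1 hlam hm hminor in
lemma contract_k (hlam1 : lam ≤ 1) (ν : S → ℝ) (hν : ∑ z, ν z = 0) (k : ℕ) :
    ∑ y, |∑ z, ν z * (P^k) z y| ≤ (1 - lam)^(k/m) * ∑ z, |ν z| := by
  have hk : k = m * (k/m) + k % m := (Nat.div_add_mod k m).symm
  have hstep : ∀ y, ∑ z, ν z * (P^k) z y
      = ∑ w, (∑ z, ν z * (P^(m*(k/m))) z w) * (P^(k % m)) w y := by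
    intro y
    have hpow : P^k = P^(m*(k/m)) * P^(k % m) := by rw [← pow_add, ← hk]
    simp only [hpow, Matrix.mul_apply, Finset.mul_sum, Finset.sum_mul]
    rw [Finset.sum_comm]
    apply Finset.sum_congr rfl; intro w _
    apply Finset.sum_congr rfl; intro z _; ring
  calc ∑ y, |∑ z, ν z * (P^k) z y|
      = ∑ y, |∑ w, (∑ z, ν z * (P^(m*(k/m))) z w) * (P^(k % m)) w y| := by
        simp only [hstep]
    _ ≤ ∑ w, |∑ z, ν z * (P^(m*(k/m))) z w| := crude_bound hP0 hP1 _ _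
    _ ≤ (1 - lam)^(k/m) * ∑ z, |ν z| :=
        contract_pow hP0 hP1 hφ0 hφ1 hlam hminor hlam1 ν hν _

end contract

lemma mgf_bound {S : Type} [Fintype S] [Nonempty S] [DecidableEq S]
    (P : Matrix S S ℝ) (hP0 : ∀ x y, 0 ≤ P x y)
    (pr : S → ℝ) (hπ0 : ∀ x, 0 ≤ pr x) (hπ1 : ∑ x, pr x = 1)
    (u Pu : S → ℝ) (s E : ℝ) (hE0 : 0 ≤ E)
    (hE : ∀ x, ∑ y, P x y * Real.exp (s * (u y - Pu x)) ≤ E) :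
    ∀ n, ∑ ω : Fin (n+1) → S,
      (pr (ω 0) * ∏ t : Fin n, P (ω t.castSucc) (ω t.succ))
        * Real.exp (s * ∑ t : Fin n, (u (ω t.succ) - Pu (ω t.castSucc))) ≤ E^n := by
  intro n
  induction n with
  | zero =>
    have : ∑ ω : Fin 1 → S, (pr (ω 0) * ∏ t : Fin 0, P (ω t.castSucc) (ω t.succ))
        * Real.exp (s * ∑ t : Fin 0, (u (ω t.succ) - Pu (ω t.castSucc)))
        = ∑ x : S, pr x := by
      apply Fintype.sum_equiv (Equiv.funUnique (Fin 1) S)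
      intro ω
      simp
    rw [this, hπ1, pow_zero]
  | succ n ih =>
    set e := Fin.snocEquiv (fun _ : Fin (n+2) => S) with he
    rw [← Equiv.sum_comp e, Fintype.sum_prod_type]
    -- pairs (y, ρ) : S × (Fin (n+1) → S), e (y, ρ) = Fin.snoc ρ y
    have key : ∀ (y : S) (ρ : Fin (n+1) → S),
        (pr ((e (y, ρ)) 0) * ∏ t : Fin (n+1), P ((e (y, ρ)) t.castSucc) ((e (y, ρ)) t.succ))
          * Real.exp (s * ∑ t : Fin (n+1), (u ((e (y, ρ)) t.succ) - Pu ((e (y, ρ)) t.castSucc)))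
        = ((pr (ρ 0) * ∏ t : Fin n, P (ρ t.castSucc) (ρ t.succ))
            * Real.exp (s * ∑ t : Fin n, (u (ρ t.succ) - Pu (ρ t.castSucc))))
          * (P (ρ (Fin.last n)) y * Real.exp (s * (u y - Pu (ρ (Fin.last n))))) := by
      intro y ρ
      have hω : ∀ j : Fin (n+1), (e (y, ρ)) j.castSucc = ρ j := by
        intro j; simp [he, Fin.snocEquiv]
      have hωl : (e (y, ρ)) (Fin.last (n+1)) = y := by
        simp [he, Fin.snocEquiv]
      have h0 : (e (y, ρ)) 0 = ρ 0 := by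
        have := hω 0
        rwa [Fin.castSucc_zero] at this
      have hprod : ∏ t : Fin (n+1), P ((e (y, ρ)) t.castSucc) ((e (y, ρ)) t.succ)
          = (∏ t : Fin n, P (ρ t.castSucc) (ρ t.succ)) * P (ρ (Fin.last n)) y := by
        rw [Fin.prod_univ_castSucc]
        congr 1
        · apply Finset.prod_congr rfl
          intro t _
          rw [hω t.castSucc, Fin.succ_castSucc, hω t.succ]
        · rw [hω (Fin.last n), Fin.succ_last, hωl]
      have hsum : ∑ t : Fin (n+1), (u ((e (y, ρ)) t.succ) - Pu ((e (y, ρ)) t.castSucc))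
          = (∑ t : Fin n, (u (ρ t.succ) - Pu (ρ t.castSucc))) + (u y - Pu (ρ (Fin.last n))) := by
        rw [Fin.sum_univ_castSucc]
        congr 1
        · apply Finset.sum_congr rfl
          intro t _
          rw [hω t.castSucc, Fin.succ_castSucc, hω t.succ]
        · rw [hω (Fin.last n), Fin.succ_last, hωl]
      rw [h0, hprod, hsum, mul_add, Real.exp_add]
      ring
    calc ∑ y : S, ∑ ρ : Fin (n+1) → S,
          (pr ((e (y, ρ)) 0) * ∏ t : Fin (n+1), P ((e (y, ρ)) t.castSucc) ((e (y, ρ)) t.succ))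
          * Real.exp (s * ∑ t : Fin (n+1), (u ((e (y, ρ)) t.succ) - Pu ((e (y, ρ)) t.castSucc)))
        = ∑ ρ : Fin (n+1) → S, ((pr (ρ 0) * ∏ t : Fin n, P (ρ t.castSucc) (ρ t.succ))
            * Real.exp (s * ∑ t : Fin n, (u (ρ t.succ) - Pu (ρ t.castSucc))))
          * ∑ y : S, P (ρ (Fin.last n)) y * Real.exp (s * (u y - Pu (ρ (Fin.last n)))) := by
          rw [Finset.sum_comm]
          apply Finset.sum_congr rfl; intro ρ _
          rw [Finset.mul_sum]
          apply Finset.sum_congr rfl; intro y _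
          exact key y ρ
      _ ≤ ∑ ρ : Fin (n+1) → S, ((pr (ρ 0) * ∏ t : Fin n, P (ρ t.castSucc) (ρ t.succ))
            * Real.exp (s * ∑ t : Fin n, (u (ρ t.succ) - Pu (ρ t.castSucc)))) * E := by
          apply Finset.sum_le_sum; intro ρ _
          apply mul_le_mul_of_nonneg_left (hE _)
          apply mul_nonneg (mul_nonneg (hπ0 _) (Finset.prod_nonneg fun t _ => hP0 _ _))
            (le_of_lt (Real.exp_pos _))
      _ = (∑ ρ : Fin (n+1) → S, (pr (ρ 0) * ∏ t : Fin n, P (ρ t.castSucc) (ρ t.succ))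
            * Real.exp (s * ∑ t : Fin n, (u (ρ t.succ) - Pu (ρ t.castSucc)))) * E := by
          rw [Finset.sum_mul]
      _ ≤ E^n * E := mul_le_mul_of_nonneg_right ih hE0
      _ = E^(n+1) := by rw [pow_succ]

lemma sum_ite_one_mul {S : Type} [Fintype S] [DecidableEq S] (x : S) (f : S → ℝ) :
    ∑ z, (if z = x then (1:ℝ) else 0) * f z = f x := by
  simp [ite_mul]

lemma sum_ite_one_mul' {S : Type} [Fintype S] [DecidableEq S] (x : S) (f : S → ℝ) :
    ∑ z, (if x = z then (1:ℝ) else 0) * f z = f x := by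
  simp [ite_mul]


end
theorem stmt_4
    {S : Type} [Fintype S] [Nonempty S] [DecidableEq S]
    (P : Matrix S S ℝ) (hP0 : ∀ x y, 0 ≤ P x y) (hP1 : ∀ x, ∑ y, P x y = 1)
    (π : S → ℝ) (hπ0 : ∀ x, 0 ≤ π x) (hπ1 : ∑ x, π x = 1)
    (hπstat : ∀ y, ∑ x, π x * P x y = π y)
    -- (A.3): minorization condition
    (φ : S → ℝ) (hφ0 : ∀ y, 0 ≤ φ y) (hφ1 : ∑ y, φ y = 1)
    (lam : ℝ) (hlam : 0 < lam)
    (m : ℕ) (hm : 1 ≤ m)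
    (hminor : ∀ x y, lam * φ y ≤ (P ^ m) x y)
    -- the function g and its sup-norm
    (g : S → ℝ) (gnorm : ℝ)
    (hgnorm : IsGreatest {r : ℝ | ∃ x, r = |g x|} gnorm) (hgpos : 0 < gnorm)
    (ε : ℝ) (hε : 0 < ε)
    (T : ℕ) (hT : 2 * gnorm * m / (lam * ε) < (T : ℝ))
    -- the stationary chain of length T+1, with states X_0, X_1, ..., X_T
    (prob : (Fin (T + 1) → S) → ℝ)
    (hprob : ∀ X, prob X = π (X 0) * ∏ t : Fin T, P (X t.castSucc) (X t.succ)) :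
    -- P(|S_T − E_π g| ≥ ε) ≤ 2·exp(−λ²(Tε − 2‖g‖m/λ)²/(2T‖g‖²m²)),
    -- where S_T = (1/T)·Σ_{t=1}^T g(X_t)
    (∑ X, ({X' | ε ≤ |(1 / (T : ℝ)) * (∑ t : Fin T, g (X' t.succ)) - ∑ x, π x * g x|} :
        Set (Fin (T + 1) → S)).indicator prob X)
      ≤ 2 * Real.exp (-(lam ^ 2 * ((T : ℝ) * ε - 2 * gnorm * m / lam) ^ 2) /
          (2 * (T : ℝ) * gnorm ^ 2 * (m : ℝ) ^ 2)) := by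
  classical
  have hg : ∀ x, |g x| ≤ gnorm := fun x => hgnorm.2 ⟨x, rfl⟩
  have hm0 : (0:ℝ) < (m:ℝ) := by exact_mod_cast hm
  have x0 : S := Classical.arbitrary S
  have hlam1 : lam ≤ 1 := by
    have h1 : ∑ y, lam * φ y ≤ ∑ y, (P^m) x0 y :=
      Finset.sum_le_sum fun y _ => hminor x0 y
    rw [← Finset.mul_sum, hφ1, mul_one, pow_rowsum P hP1 m x0] at h1
    exact h1
  have hT0 : (0:ℝ) < (T:ℝ) := lt_trans (by positivity) hT
  set r : ℝ := 1 - lam with hrdef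
  have hr0 : 0 ≤ r := by rw [hrdef]; linarith
  have hr1 : r < 1 := by rw [hrdef]; linarith
  set μ : ℝ := ∑ x, π x * g x with hμdef
  set gt : S → ℝ := fun x => g x - μ with hgtdef
  set term : ℕ → S → ℝ := fun k x => ∑ y, (P^k) x y * gt y with htermdef
  -- stationarity of powers
  have hstat : ∀ k y, ∑ x, π x * (P^k) x y = π y := by
    intro k
    induction k with
    | zero => intro y; simp [Matrix.one_apply]
    | succ k ih =>
      intro y
      simp only [pow_succ, Matrix.mul_apply, Finset.mul_sum]
      rw [Finset.sum_comm]
      calc ∑ z, ∑ x, π x * ((P^k) x z * P z y)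
          = ∑ z, (∑ x, π x * (P^k) x z) * P z y := by
            apply Finset.sum_congr rfl; intro z _
            rw [Finset.sum_mul]
            apply Finset.sum_congr rfl; intro x _; ring
        _ = π y := by simp only [ih]; exact hπstat y
  -- representation of term
  have termrepr : ∀ k x, term k x = ∑ y, ((P^k) x y - π y) * g y := by
    intro k x
    have e1 : term k x = ∑ y, (P^k) x y * g y - μ := by
      simp only [htermdef, hgtdef]
      have : ∑ y, (P^k) x y * (g y - μ)
          = ∑ y, (P^k) x y * g y - (∑ y, (P^k) x y) * μ := by
        rw [Finset.sum_mul, ← Finset.sum_sub_distrib]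
        apply Finset.sum_congr rfl; intro y _; ring
      rw [this, pow_rowsum P hP1, one_mul]
    have e2 : ∑ y, ((P^k) x y - π y) * g y = ∑ y, (P^k) x y * g y - μ := by
      rw [hμdef, ← Finset.sum_sub_distrib]
      apply Finset.sum_congr rfl; intro y _; ring
    rw [e1, e2]
  -- absolute bound on term
  have termabs : ∀ k x, |term k x| ≤ 2 * gnorm * r^(k/m) := by
    intro k x
    set ν : S → ℝ := fun z => (if z = x then (1:ℝ) else 0) - π z with hνdef
    have hν : ∑ z, ν z = 0 := by
      simp only [hνdef]
      rw [Finset.sum_sub_distrib, hπ1, Finset.sum_ite_eq' Finset.univ x (fun _ => (1:ℝ))]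
      simp
    have hνP : ∀ y, ∑ z, ν z * (P^k) z y = (P^k) x y - π y := by
      intro y
      simp only [hνdef, sub_mul]
      rw [Finset.sum_sub_distrib]
      congr 1
      · exact sum_ite_one_mul x (fun z => (P^k) z y)
      · exact hstat k y
    have hνabs : ∑ z, |ν z| ≤ 2 := by
      calc ∑ z, |ν z| ≤ ∑ z, ((if z = x then (1:ℝ) else 0) + π z) := by
            apply Finset.sum_le_sum; intro z _
            refine le_trans (abs_sub _ _) ?_
            have h1 : |if z = x then (1:ℝ) else 0| = if z = x then (1:ℝ) else 0 := by
              split <;> simp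
            rw [h1, abs_of_nonneg (hπ0 z)]
        _ = 2 := by
            rw [Finset.sum_add_distrib, hπ1,
              Finset.sum_ite_eq' Finset.univ x (fun _ => (1:ℝ))]
            simp
            norm_num
    rw [termrepr]
    calc |∑ y, ((P^k) x y - π y) * g y| ≤ ∑ y, |(P^k) x y - π y| * gnorm := by
          refine le_trans (Finset.abs_sum_le_sum_abs _ _) (Finset.sum_le_sum ?_)
          intro y _
          rw [abs_mul]
          exact mul_le_mul_of_nonneg_left (hg y) (abs_nonneg _)
      _ = (∑ y, |∑ z, ν z * (P^k) z y|) * gnorm := by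
          rw [← Finset.sum_mul]
          congr 1
          apply Finset.sum_congr rfl; intro y _
          rw [hνP y]
      _ ≤ (r^(k/m) * ∑ z, |ν z|) * gnorm := by
          apply mul_le_mul_of_nonneg_right _ (le_of_lt hgpos)
          exact contract_k hP0 hP1 hφ0 hφ1 hlam hm hminor hlam1 ν hν k
      _ ≤ 2 * gnorm * r^(k/m) := by
          have hpow : (0:ℝ) ≤ r^(k/m) := pow_nonneg hr0 _
          have h1 : r^(k/m) * ∑ z, |ν z| ≤ r^(k/m) * 2 :=
            mul_le_mul_of_nonneg_left hνabs hpow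
          calc (r^(k/m) * ∑ z, |ν z|) * gnorm ≤ (r^(k/m) * 2) * gnorm :=
                mul_le_mul_of_nonneg_right h1 (le_of_lt hgpos)
            _ = 2 * gnorm * r^(k/m) := by ring
  -- difference bound on term
  have termdiff : ∀ k x x', |term k x - term k x'| ≤ 2 * gnorm * r^(k/m) := by
    intro k x x'
    set ν : S → ℝ := fun z => (if z = x then (1:ℝ) else 0) - (if z = x' then (1:ℝ) else 0)
      with hνdef
    have hν : ∑ z, ν z = 0 := by
      simp only [hνdef]
      rw [Finset.sum_sub_distrib, Finset.sum_ite_eq' Finset.univ x (fun _ => (1:ℝ)),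
        Finset.sum_ite_eq' Finset.univ x' (fun _ => (1:ℝ))]
      simp
    have hνP : ∀ y, ∑ z, ν z * (P^k) z y = (P^k) x y - (P^k) x' y := by
      intro y
      simp only [hνdef, sub_mul]
      rw [Finset.sum_sub_distrib]
      congr 1
      · exact sum_ite_one_mul x (fun z => (P^k) z y)
      · exact sum_ite_one_mul x' (fun z => (P^k) z y)
    have hνabs : ∑ z, |ν z| ≤ 2 := by
      calc ∑ z, |ν z| ≤ ∑ z, ((if z = x then (1:ℝ) else 0) + (if z = x' then (1:ℝ) else 0)) := by
            apply Finset.sum_le_sum; intro z _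
            refine le_trans (abs_sub _ _) ?_
            have h1 : |if z = x then (1:ℝ) else 0| = if z = x then (1:ℝ) else 0 := by
              split <;> simp
            have h2 : |if z = x' then (1:ℝ) else 0| = if z = x' then (1:ℝ) else 0 := by
              split <;> simp
            rw [h1, h2]
        _ = 2 := by
            rw [Finset.sum_add_distrib, Finset.sum_ite_eq' Finset.univ x (fun _ => (1:ℝ)),
              Finset.sum_ite_eq' Finset.univ x' (fun _ => (1:ℝ))]
            simp
            norm_num
    have hrepr : term k x - term k x' = ∑ y, (∑ z, ν z * (P^k) z y) * g y := by
      rw [termrepr, termrepr, ← Finset.sum_sub_distrib]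
      apply Finset.sum_congr rfl; intro y _
      rw [hνP y]; ring
    rw [hrepr]
    calc |∑ y, (∑ z, ν z * (P^k) z y) * g y| ≤ ∑ y, |∑ z, ν z * (P^k) z y| * gnorm := by
          refine le_trans (Finset.abs_sum_le_sum_abs _ _) (Finset.sum_le_sum ?_)
          intro y _
          rw [abs_mul]
          exact mul_le_mul_of_nonneg_left (hg y) (abs_nonneg _)
      _ = (∑ y, |∑ z, ν z * (P^k) z y|) * gnorm := by rw [← Finset.sum_mul]
      _ ≤ (r^(k/m) * ∑ z, |ν z|) * gnorm := by
          apply mul_le_mul_of_nonneg_right _ (le_of_lt hgpos)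
          exact contract_k hP0 hP1 hφ0 hφ1 hlam hm hminor hlam1 ν hν k
      _ ≤ 2 * gnorm * r^(k/m) := by
          have hpow : (0:ℝ) ≤ r^(k/m) := pow_nonneg hr0 _
          have h1 : r^(k/m) * ∑ z, |ν z| ≤ r^(k/m) * 2 :=
            mul_le_mul_of_nonneg_left hνabs hpow
          calc (r^(k/m) * ∑ z, |ν z|) * gnorm ≤ (r^(k/m) * 2) * gnorm :=
                mul_le_mul_of_nonneg_right h1 (le_of_lt hgpos)
            _ = 2 * gnorm * r^(k/m) := by ring
  -- geometric sum bound
  have hblock : ∀ n, ∑ k ∈ Finset.range (m*n), r^(k/m) = m * ∑ j ∈ Finset.range n, r^j := by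
    intro n
    induction n with
    | zero => simp
    | succ n ih =>
      have hmn : m*(n+1) = m*n + m := by ring
      rw [hmn, Finset.range_eq_Ico,
        ← Finset.sum_Ico_consecutive _ (Nat.zero_le (m*n)) (Nat.le_add_right (m*n) m),
        ← Finset.range_eq_Ico, ih]
      have hconst : ∑ k ∈ Finset.Ico (m*n) (m*n+m), r^(k/m) = m * r^n := by
        have : ∀ k ∈ Finset.Ico (m*n) (m*n+m), r^(k/m) = r^n := by
          intro k hk
          rw [Finset.mem_Ico] at hk
          have hdiv : k/m = n :=
            Nat.div_eq_of_lt_le (by rw [Nat.mul_comm]; exact hk.1)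
              (by rw [Nat.succ_mul, Nat.mul_comm n m]; exact hk.2)
          rw [hdiv]
        rw [Finset.sum_congr rfl this, Finset.sum_const, Nat.card_Ico]
        simp [nsmul_eq_mul]
      rw [hconst, Finset.sum_range_succ]
      ring
  have hgeo : ∀ n, ∑ k ∈ Finset.range n, r^(k/m) ≤ m/lam := by
    intro n
    have h1 : ∑ k ∈ Finset.range n, r^(k/m) ≤ ∑ k ∈ Finset.range (m*n), r^(k/m) := by
      apply Finset.sum_le_sum_of_subset_of_nonneg
      · apply Finset.range_subset_range.mpr
        calc n = 1*n := (one_mul n).symm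
          _ ≤ m*n := Nat.mul_le_mul_right n hm
      · intro k _ _; positivity
    have h2 : ∑ j ∈ Finset.range n, r^j ≤ 1/lam := by
      have hs := hasSum_geometric_of_lt_one hr0 hr1
      have h3 := Summable.sum_le_tsum (Finset.range n) (fun i _ => pow_nonneg hr0 i) hs.summable
      rw [hs.tsum_eq] at h3
      have : (1 - r)⁻¹ = 1/lam := by rw [hrdef]; ring_nf
      rw [this] at h3
      exact h3
    calc ∑ k ∈ Finset.range n, r^(k/m) ≤ m * ∑ j ∈ Finset.range n, r^j := by
          rw [← hblock n]; exact h1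
      _ ≤ m * (1/lam) := by
          apply mul_le_mul_of_nonneg_left h2 (le_of_lt hm0)
      _ = m/lam := by ring
  -- summability and definition of u
  have habs_partial : ∀ x n, ∑ k ∈ Finset.range n, |term k x| ≤ 2*gnorm*(m/lam) := by
    intro x n
    calc ∑ k ∈ Finset.range n, |term k x| ≤ ∑ k ∈ Finset.range n, 2*gnorm*r^(k/m) :=
          Finset.sum_le_sum fun k _ => termabs k x
      _ = 2*gnorm * ∑ k ∈ Finset.range n, r^(k/m) := by rw [Finset.mul_sum]
      _ ≤ 2*gnorm*(m/lam) := by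
          apply mul_le_mul_of_nonneg_left (hgeo n) (by positivity)
  have hsumm : ∀ x, Summable (fun k => term k x) := fun x =>
    Summable.of_abs (summable_of_sum_range_le (fun k => abs_nonneg _) (habs_partial x))
  set u : S → ℝ := fun x => ∑' k, term k x with hudef
  set c : ℝ := gnorm * ((m:ℝ)/lam) with hcdef
  have hc0 : 0 < c := by rw [hcdef]; positivity
  -- oscillation bound
  have hosc : ∀ x x', |u x - u x'| ≤ 2*c := by
    intro x x'
    have hsub : Summable (fun k => term k x - term k x') := (hsumm x).sub (hsumm x')
    have heq : u x - u x' = ∑' k, (term k x - term k x') := by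
      rw [hudef]; exact (Summable.tsum_sub (hsumm x) (hsumm x')).symm
    rw [heq]
    have hpart : ∀ n, |∑ k ∈ Finset.range n, (term k x - term k x')| ≤ 2*c := by
      intro n
      calc |∑ k ∈ Finset.range n, (term k x - term k x')|
          ≤ ∑ k ∈ Finset.range n, |term k x - term k x'| := Finset.abs_sum_le_sum_abs _ _
        _ ≤ ∑ k ∈ Finset.range n, 2*gnorm*r^(k/m) :=
            Finset.sum_le_sum fun k _ => termdiff k x x'
        _ = 2*gnorm * ∑ k ∈ Finset.range n, r^(k/m) := by rw [Finset.mul_sum]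
        _ ≤ 2*gnorm*(m/lam) := mul_le_mul_of_nonneg_left (hgeo n) (by positivity)
        _ = 2*c := by rw [hcdef]; ring
    rw [abs_le]
    constructor
    · have h1 : ∑' k, -(term k x - term k x') ≤ 2*c := by
        apply Summable.tsum_le_of_sum_range_le hsub.neg
        intro n
        rw [Finset.sum_neg_distrib]
        calc -∑ k ∈ Finset.range n, (term k x - term k x')
            ≤ |∑ k ∈ Finset.range n, (term k x - term k x')| := neg_le_abs _
          _ ≤ 2*c := hpart n
      rw [tsum_neg] at h1
      linarith
    · apply Summable.tsum_le_of_sum_range_le hsub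
      intro n
      exact le_trans (le_abs_self _) (hpart n)
  -- Poisson equation
  have hterm0 : ∀ x, term 0 x = gt x := by
    intro x
    simp only [htermdef, pow_zero, Matrix.one_apply]
    exact sum_ite_one_mul' x gt
  have htermsucc : ∀ k x, term (k+1) x = ∑ y, P x y * term k y := by
    intro k x
    simp only [htermdef, pow_succ', Matrix.mul_apply, Finset.sum_mul, Finset.mul_sum]
    rw [Finset.sum_comm]
    apply Finset.sum_congr rfl; intro y _
    apply Finset.sum_congr rfl; intro y' _
    ring
  set Pu : S → ℝ := fun x => ∑ y, P x y * u y with hPudef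
  have hpoisson : ∀ x, u x = gt x + Pu x := by
    intro x
    have h1 : u x = term 0 x + ∑' k, term (k+1) x := by
      rw [hudef]; exact Summable.tsum_eq_zero_add (hsumm x)
    have h2 : ∑' k, term (k+1) x = ∑ y, ∑' k, P x y * term k y := by
      rw [← Summable.tsum_finsetSum (fun y _ => Summable.mul_left (P x y) (hsumm y))]
      apply tsum_congr; intro k
      exact htermsucc k x
    have h3 : ∀ y, ∑' (k:ℕ), P x y * term k y = P x y * u y := fun y => tsum_mul_left
    rw [h1, hterm0, h2]
    simp only [h3]
    rfl
  have hgtu : ∀ x, gt x = u x - Pu x := fun x => by rw [hpoisson x]; ring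
  -- step bound
  have hstep : ∀ s x, ∑ y, P x y * Real.exp (s * (u y - Pu x)) ≤ Real.exp (s^2*c^2/2) := by
    intro s x
    obtain ⟨y1, -, hy1⟩ := Finset.exists_mem_eq_sup' Finset.univ_nonempty u
    obtain ⟨y2, -, hy2⟩ := Finset.exists_mem_eq_inf' Finset.univ_nonempty u
    set a := Finset.univ.inf' Finset.univ_nonempty u - Pu x with hadef
    set b := Finset.univ.sup' Finset.univ_nonempty u - Pu x with hbdef
    have hab : ∀ y, a ≤ u y - Pu x ∧ u y - Pu x ≤ b := by
      intro y
      constructor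
      · have := Finset.inf'_le u (Finset.mem_univ y)
        rw [hadef]; linarith
      · have := Finset.le_sup' u (Finset.mem_univ y)
        rw [hbdef]; linarith
    have hmean : ∑ y, P x y * (u y - Pu x) = 0 := by
      have : ∑ y, P x y * (u y - Pu x)
          = ∑ y, P x y * u y - (∑ y, P x y) * Pu x := by
        rw [Finset.sum_mul, ← Finset.sum_sub_distrib]
        apply Finset.sum_congr rfl; intro y _; ring
      rw [this, hP1, one_mul, hPudef]
      simp
    have key := hoeff_sum (fun y => P x y) (hP0 x) (hP1 x) (fun y => u y - Pu x) a b hab hmean s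
    refine le_trans key (Real.exp_le_exp.mpr ?_)
    have hba : b - a = u y1 - u y2 := by rw [hadef, hbdef, hy1, hy2]; ring
    have hba2 : b - a ≤ 2*c := by
      rw [hba]
      exact le_trans (le_abs_self _) (hosc y1 y2)
    have hba0 : 0 ≤ b - a := by
      have h1 := (hab x0).1
      have h2 := (hab x0).2
      linarith
    have : (b-a)^2 ≤ 4*c^2 := by nlinarith
    have h4 := mul_le_mul_of_nonneg_left this (sq_nonneg s)
    calc s^2*(b-a)^2/8 ≤ s^2*(4*c^2)/8 := div_le_div_of_nonneg_right h4 (by norm_num)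
      _ = s^2*c^2/2 := by ring
  -- MGF bound
  have hmgf : ∀ s : ℝ, ∑ ω : Fin (T+1) → S,
      (π (ω 0) * ∏ t : Fin T, P (ω t.castSucc) (ω t.succ))
        * Real.exp (s * ∑ t : Fin T, (u (ω t.succ) - Pu (ω t.castSucc)))
      ≤ (Real.exp (s^2*c^2/2))^T :=
    fun s => mgf_bound P hP0 π hπ0 hπ1 u Pu s _ (le_of_lt (Real.exp_pos _)) (hstep s) T
  -- Pu oscillation
  have hPuosc : ∀ x x', |Pu x - Pu x'| ≤ 2*c := by
    intro x x'
    have inner1 : ∀ y, ∑ y', P x y * P x' y' * u y = P x y * u y := by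
      intro y
      calc ∑ y', P x y * P x' y' * u y = (P x y * u y) * ∑ y', P x' y' := by
            rw [Finset.mul_sum]
            apply Finset.sum_congr rfl; intro y' _; ring
        _ = P x y * u y := by rw [hP1 x', mul_one]
    have e1 : ∑ y, ∑ y', P x y * P x' y' * u y = Pu x := by
      rw [Finset.sum_congr rfl (fun y _ => inner1 y)]
    have e2 : ∑ y, ∑ y', P x y * P x' y' * u y' = Pu x' := by
      rw [Finset.sum_comm]
      have inner2 : ∀ y', ∑ y, P x y * P x' y' * u y' = P x' y' * u y' := by
        intro y'
        calc ∑ y, P x y * P x' y' * u y' = (P x' y' * u y') * ∑ y, P x y := by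
              rw [Finset.mul_sum]
              apply Finset.sum_congr rfl; intro y _; ring
          _ = P x' y' * u y' := by rw [hP1 x, mul_one]
      rw [Finset.sum_congr rfl (fun y' _ => inner2 y')]
    have key : Pu x - Pu x' = ∑ y, ∑ y', P x y * P x' y' * (u y - u y') := by
      rw [← e1, ← e2, ← Finset.sum_sub_distrib]
      apply Finset.sum_congr rfl; intro y _
      rw [← Finset.sum_sub_distrib]
      apply Finset.sum_congr rfl; intro y' _; ring
    rw [key]
    refine le_trans (Finset.abs_sum_le_sum_abs _ _) ?_
    have hyb : ∀ y, |∑ y', P x y * P x' y' * (u y - u y')|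
        ≤ ∑ y', P x y * P x' y' * (2*c) := by
      intro y
      refine le_trans (Finset.abs_sum_le_sum_abs _ _) (Finset.sum_le_sum ?_)
      intro y' _
      have hpp : 0 ≤ P x y * P x' y' := mul_nonneg (hP0 x y) (hP0 x' y')
      rw [abs_mul, abs_of_nonneg hpp]
      exact mul_le_mul_of_nonneg_left (hosc y y') hpp
    refine le_trans (Finset.sum_le_sum fun y _ => hyb y) ?_
    have inner3 : ∀ y, ∑ y', P x y * P x' y' * (2*c) = P x y * (2*c) := by
      intro y
      calc ∑ y', P x y * P x' y' * (2*c) = (P x y * (2*c)) * ∑ y', P x' y' := by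
            rw [Finset.mul_sum]
            apply Finset.sum_congr rfl; intro y' _; ring
        _ = P x y * (2*c) := by rw [hP1 x', mul_one]
    rw [Finset.sum_congr rfl (fun y _ => inner3 y), ← Finset.sum_mul, hP1 x, one_mul]
  -- casting lemmas for Fin
  have hcast1 : ∀ t : Fin T, (((t:ℕ)) : Fin (T+1)) = t.castSucc := by
    intro t
    apply Fin.ext
    rw [Fin.val_natCast]
    exact Nat.mod_eq_of_lt (lt_trans t.isLt (Nat.lt_succ_self T))
  have hcast2 : ∀ t : Fin T, (((t:ℕ)+1 : ℕ) : Fin (T+1)) = t.succ := by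
    intro t
    apply Fin.ext
    rw [Fin.val_natCast]
    have : (t:ℕ)+1 < T+1 := Nat.succ_lt_succ t.isLt
    rw [Nat.mod_eq_of_lt this]
    rfl
  have hcast0 : (((0:ℕ)) : Fin (T+1)) = 0 := by simp
  have hcastT : (((T:ℕ)) : Fin (T+1)) = Fin.last T := by
    apply Fin.ext
    rw [Fin.val_natCast]
    simp [Nat.mod_eq_of_lt]
  -- telescoping identity
  have htel : ∀ ω : Fin (T+1) → S,
      ∑ t : Fin T, gt (ω t.succ)
        = (∑ t : Fin T, (u (ω t.succ) - Pu (ω t.castSucc)))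
          + (Pu (ω 0) - Pu (ω (Fin.last T))) := by
    intro ω
    have e0 : ∀ t : Fin T, gt (ω t.succ)
        = (u (ω t.succ) - Pu (ω t.castSucc)) + (Pu (ω t.castSucc) - Pu (ω t.succ)) := by
      intro t; rw [hgtu]; ring
    rw [Finset.sum_congr rfl (fun t _ => e0 t), Finset.sum_add_distrib]
    congr 1
    have hrange := Finset.sum_range_sub' (fun i => Pu (ω ((i:ℕ) : Fin (T+1)))) T
    rw [← Fin.sum_univ_eq_sum_range
      (fun i => Pu (ω ((i:ℕ) : Fin (T+1))) - Pu (ω (((i:ℕ)+1 : ℕ) : Fin (T+1)))) T] at hrange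
    have hl : ∑ t : Fin T, (Pu (ω t.castSucc) - Pu (ω t.succ))
        = ∑ t : Fin T, (Pu (ω (((t:ℕ)) : Fin (T+1))) - Pu (ω (((t:ℕ)+1 : ℕ) : Fin (T+1)))) :=
      Finset.sum_congr rfl fun t _ => by rw [hcast1 t, hcast2 t]
    rw [hl]
    rw [hcast0, hcastT] at hrange
    exact hrange
  -- constants
  set a0 : ℝ := (T:ℝ)*ε - 2*gnorm*(m:ℝ)/lam with ha0def
  have h2c : 2*gnorm*(m:ℝ)/lam = 2*c := by rw [hcdef]; ring
  have ha0pos : 0 < a0 := by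
    have h1 : 2*gnorm*(m:ℝ) < (T:ℝ)*(lam*ε) := by
      rw [← div_lt_iff₀ (by positivity)] at *
      linarith [hT]
    rw [ha0def, sub_pos, div_lt_iff₀ hlam]
    nlinarith
  set s0 : ℝ := a0/((T:ℝ)*c^2) with hs0def
  have hs0pos : 0 < s0 := by rw [hs0def]; positivity
  set W : (Fin (T+1) → S) → ℝ :=
    fun ω => ∑ t : Fin T, (u (ω t.succ) - Pu (ω t.castSucc)) with hWdef
  -- event implies large |W|
  have hev : ∀ ω : Fin (T+1) → S,
      ε ≤ |(1/(T:ℝ)) * (∑ t : Fin T, g (ω t.succ)) - μ| → a0 ≤ |W ω| := by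
    intro ω hω
    have hsumgt : ∑ t : Fin T, gt (ω t.succ) = (∑ t : Fin T, g (ω t.succ)) - (T:ℝ)*μ := by
      simp only [hgtdef]
      rw [Finset.sum_sub_distrib, Finset.sum_const, Finset.card_univ, Fintype.card_fin]
      simp [nsmul_eq_mul]
    have habs : (T:ℝ)*ε ≤ |∑ t : Fin T, gt (ω t.succ)| := by
      have h1 : (1/(T:ℝ)) * (∑ t : Fin T, g (ω t.succ)) - μ
          = (∑ t : Fin T, gt (ω t.succ))/(T:ℝ) := by
        rw [hsumgt]; field_simp
      rw [h1, abs_div, abs_of_pos hT0, le_div_iff₀ hT0] at hω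
      linarith
    have htri := htel ω
    have hosc2 := hPuosc (ω 0) (ω (Fin.last T))
    have htr2 : |∑ t : Fin T, gt (ω t.succ)|
        ≤ |W ω| + |Pu (ω 0) - Pu (ω (Fin.last T))| := by
      rw [htri, hWdef]
      exact abs_add_le _ _
    have ha0eq : a0 = (T:ℝ)*ε - 2*c := by rw [ha0def, h2c]
    linarith
  have hprob0 : ∀ ω, 0 ≤ prob ω := by
    intro ω; rw [hprob]
    exact mul_nonneg (hπ0 _) (Finset.prod_nonneg fun t _ => hP0 _ _)
  -- pointwise Chernoff split
  have hind : ∀ ω : Fin (T+1) → S,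
      ({X' | ε ≤ |(1 / (T : ℝ)) * (∑ t : Fin T, g (X' t.succ)) - μ|} :
        Set (Fin (T + 1) → S)).indicator prob ω
      ≤ prob ω * Real.exp (s0 * W ω + -(s0*a0))
        + prob ω * Real.exp ((-s0) * W ω + -(s0*a0)) := by
    intro ω
    have hpos1 : 0 ≤ prob ω * Real.exp (s0 * W ω + -(s0*a0)) :=
      mul_nonneg (hprob0 ω) (le_of_lt (Real.exp_pos _))
    have hpos2 : 0 ≤ prob ω * Real.exp ((-s0) * W ω + -(s0*a0)) :=
      mul_nonneg (hprob0 ω) (le_of_lt (Real.exp_pos _))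
    by_cases hmem : ω ∈ ({X' | ε ≤ |(1 / (T : ℝ)) * (∑ t : Fin T, g (X' t.succ)) - μ|} :
        Set (Fin (T + 1) → S))
    · rw [Set.indicator_of_mem hmem]
      have ha := hev ω hmem
      rcases le_abs.mp ha with h | h
      · have h1 : (1:ℝ) ≤ Real.exp (s0 * W ω + -(s0*a0)) := by
          rw [← Real.exp_zero]
          apply Real.exp_le_exp.mpr
          nlinarith
        have := le_mul_of_one_le_right (hprob0 ω) h1
        linarith
      · have h1 : (1:ℝ) ≤ Real.exp ((-s0) * W ω + -(s0*a0)) := by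
          rw [← Real.exp_zero]
          apply Real.exp_le_exp.mpr
          nlinarith
        have := le_mul_of_one_le_right (hprob0 ω) h1
        linarith
    · rw [Set.indicator_of_notMem hmem]
      linarith
  -- assemble
  have hsum1 : ∑ X : Fin (T+1) → S, prob X * Real.exp (s0 * W X)
      ≤ (Real.exp (s0^2*c^2/2))^T := by
    have h1 : ∑ X : Fin (T+1) → S, prob X * Real.exp (s0 * W X)
        = ∑ ω : Fin (T+1) → S, (π (ω 0) * ∏ t : Fin T, P (ω t.castSucc) (ω t.succ))
          * Real.exp (s0 * ∑ t : Fin T, (u (ω t.succ) - Pu (ω t.castSucc))) := by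
      apply Finset.sum_congr rfl; intro X _
      rw [hprob, hWdef]
    rw [h1]
    exact hmgf s0
  have hsum2 : ∑ X : Fin (T+1) → S, prob X * Real.exp ((-s0) * W X)
      ≤ (Real.exp (s0^2*c^2/2))^T := by
    have h1 : ∑ X : Fin (T+1) → S, prob X * Real.exp ((-s0) * W X)
        = ∑ ω : Fin (T+1) → S, (π (ω 0) * ∏ t : Fin T, P (ω t.castSucc) (ω t.succ))
          * Real.exp ((-s0) * ∑ t : Fin T, (u (ω t.succ) - Pu (ω t.castSucc))) := by
      apply Finset.sum_congr rfl; intro X _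
      rw [hprob, hWdef]
    rw [h1]
    have := hmgf (-s0)
    rwa [neg_sq] at this
  have hfinal : (∑ X, ({X' | ε ≤ |(1 / (T : ℝ)) * (∑ t : Fin T, g (X' t.succ)) - μ|} :
        Set (Fin (T + 1) → S)).indicator prob X)
      ≤ 2 * Real.exp ((T:ℝ)*(s0^2*c^2/2) + -(s0*a0)) := by
    calc (∑ X, ({X' | ε ≤ |(1 / (T : ℝ)) * (∑ t : Fin T, g (X' t.succ)) - μ|} :
          Set (Fin (T + 1) → S)).indicator prob X)
        ≤ ∑ X : Fin (T+1) → S, (prob X * Real.exp (s0 * W X + -(s0*a0))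
            + prob X * Real.exp ((-s0) * W X + -(s0*a0))) :=
          Finset.sum_le_sum fun X _ => hind X
      _ = (∑ X : Fin (T+1) → S, prob X * Real.exp (s0 * W X)) * Real.exp (-(s0*a0))
          + (∑ X : Fin (T+1) → S, prob X * Real.exp ((-s0) * W X)) * Real.exp (-(s0*a0)) := by
          rw [Finset.sum_add_distrib, Finset.sum_mul, Finset.sum_mul]
          congr 1 <;> (apply Finset.sum_congr rfl; intro X _; rw [Real.exp_add]; ring)
      _ ≤ (Real.exp (s0^2*c^2/2))^T * Real.exp (-(s0*a0))
          + (Real.exp (s0^2*c^2/2))^T * Real.exp (-(s0*a0)) := by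
          have he := le_of_lt (Real.exp_pos (-(s0*a0)))
          exact add_le_add (mul_le_mul_of_nonneg_right hsum1 he)
            (mul_le_mul_of_nonneg_right hsum2 he)
      _ = 2 * Real.exp ((T:ℝ)*(s0^2*c^2/2) + -(s0*a0)) := by
          rw [← Real.exp_nat_mul, ← Real.exp_add]
          ring
  refine le_trans hfinal ?_
  have hexp_eq : (T:ℝ)*(s0^2*c^2/2) + -(s0*a0)
      = -(lam ^ 2 * a0 ^ 2) / (2 * (T : ℝ) * gnorm ^ 2 * (m : ℝ) ^ 2) := by
    rw [hs0def, hcdef]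
    have hlamne : lam ≠ 0 := ne_of_gt hlam
    have hTne : (T:ℝ) ≠ 0 := ne_of_gt hT0
    have hgne : gnorm ≠ 0 := ne_of_gt hgpos
    have hmne : (m:ℝ) ≠ 0 := ne_of_gt hm0
    field_simp
    ring
  rw [hexp_eq, ha0def]
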